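/- Let g : ℝⁿ → ℝ be C¹, σ a probability density on ℝⁿ, U the orthogonal eigenvector matrix of C = ∫ ∇g(γ)∇g(γ)ᵀ σ(γ) dγ with eigenvalues λ₁ ≥ … ≥ λₙ. Define h(δ) = g(Uδ) and the induced density σ'(δ) = σ(Uδ). Then the derivative-based sensitivity metric ν_i = ∫ (∂h/∂δ_i)² σ'(δ) dδ equals λ_i for each i. -/

import Mathlib

open Matrix MeasureTheory
open scoped RealInnerProductSpace

/-- Rotating coordinates by the orthogonal eigenvector matrix U of the
active subspace matrix C = ∫ ∇g ∇gᵀ σ dγ, the derivative-based sensitivity metric of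
the i-th rotated coordinate, ν_i = ∫ (∂h/∂δ_i)² σ(Uδ) dδ for h(δ) = g(Uδ), equals the
i-th eigenvalue λ_i. -/
theorem stmt13 (n : ℕ)
    (g : EuclideanSpace ℝ (Fin n) → ℝ) (hg : ContDiff ℝ 1 g)
    (Gg : EuclideanSpace ℝ (Fin n) → EuclideanSpace ℝ (Fin n))
    (hGg : ∀ γ, HasGradientAt g (Gg γ) γ)
    (σ : EuclideanSpace ℝ (Fin n) → ℝ)
    (hσ0 : ∀ γ, 0 ≤ σ γ) (hσ1 : ∫ γ, σ γ = 1)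
    (C : Matrix (Fin n) (Fin n) ℝ)
    (hC : ∀ i j, C i j = ∫ γ, Gg γ i * Gg γ j * σ γ)
    (hIntC : ∀ i j, Integrable (fun γ => Gg γ i * Gg γ j * σ γ))
    (U : Matrix (Fin n) (Fin n) ℝ) (hU : Uᵀ * U = 1)
    (lam : Fin n → ℝ) (hlam : Antitone lam)
    (heig : ∀ i : Fin n, C *ᵥ (fun j => U j i) = lam i • (fun j => U j i))
    (h : EuclideanSpace ℝ (Fin n) → ℝ)
    (hh : ∀ δ : EuclideanSpace ℝ (Fin n), h δ = g (WithLp.toLp 2 (U *ᵥ δ : Fin n → ℝ)))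
    (Gh : EuclideanSpace ℝ (Fin n) → EuclideanSpace ℝ (Fin n))
    (hGh : ∀ δ, HasGradientAt h (Gh δ) δ)
    (hIntν : ∀ i, Integrable (fun δ : EuclideanSpace ℝ (Fin n) =>
      (Gh δ i) ^ 2 * σ (WithLp.toLp 2 (U *ᵥ δ : Fin n → ℝ)))) :
    ∀ i : Fin n,
      (∫ δ : EuclideanSpace ℝ (Fin n), (Gh δ i) ^ 2 * σ (WithLp.toLp 2 (U *ᵥ δ : Fin n → ℝ)))
        = lam i := by
  classical
  have hUU : U * Uᵀ = 1 := mul_eq_one_comm.mp hU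
  have hinv : ∀ x : Fin n → ℝ, Uᵀ *ᵥ (U *ᵥ x) = x := fun x => by
    rw [Matrix.mulVec_mulVec, hU, Matrix.one_mulVec]
  have hinv' : ∀ x : Fin n → ℝ, U *ᵥ (Uᵀ *ᵥ x) = x := fun x => by
    rw [Matrix.mulVec_mulVec, hUU, Matrix.one_mulVec]
  let eL : EuclideanSpace ℝ (Fin n) ≃ₗ[ℝ] EuclideanSpace ℝ (Fin n) :=
    { toFun := fun δ => WithLp.toLp 2 (U *ᵥ (δ : Fin n → ℝ) : Fin n → ℝ)
      invFun := fun δ => WithLp.toLp 2 (Uᵀ *ᵥ (δ : Fin n → ℝ) : Fin n → ℝ)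
      map_add' := fun x y => congrArg (WithLp.toLp 2) (Matrix.mulVec_add U x y)
      map_smul' := fun c x => congrArg (WithLp.toLp 2) (Matrix.mulVec_smul U c x)
      left_inv := fun x => by simp only [WithLp.ofLp_toLp, hinv, WithLp.toLp_ofLp]
      right_inv := fun x => by simp only [WithLp.ofLp_toLp, hinv', WithLp.toLp_ofLp] }
  have hdot : ∀ x y : Fin n → ℝ, (U *ᵥ x) ⬝ᵥ (U *ᵥ y) = x ⬝ᵥ y := by
    intro x y
    rw [dotProduct_comm, Matrix.dotProduct_mulVec, ← Matrix.mulVec_transpose, hinv y]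
    exact dotProduct_comm _ _
  have hinner : ∀ x y : EuclideanSpace ℝ (Fin n),
      (inner ℝ (eL x) (eL y) : ℝ) = inner ℝ x y := by
    intro x y
    have h1 : (inner ℝ (eL x) (eL y) : ℝ) = (U *ᵥ (x : Fin n → ℝ)) ⬝ᵥ (U *ᵥ (y : Fin n → ℝ)) := by
      simp [PiLp.inner_apply, dotProduct, mul_comm, eL]
      rfl
    have h2 : (inner ℝ x y : ℝ) = (x : Fin n → ℝ) ⬝ᵥ (y : Fin n → ℝ) := by
      simp [PiLp.inner_apply, dotProduct, mul_comm]
    rw [h1, h2, hdot]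
  let e : EuclideanSpace ℝ (Fin n) ≃ₗᵢ[ℝ] EuclideanSpace ℝ (Fin n) :=
    eL.isometryOfInner hinner
  have he : ∀ δ : EuclideanSpace ℝ (Fin n), e δ = WithLp.toLp 2 (U *ᵥ (δ : Fin n → ℝ) : Fin n → ℝ) :=
    fun δ => rfl
  have hesymm : ∀ v : EuclideanSpace ℝ (Fin n),
      e.symm v = WithLp.toLp 2 (Uᵀ *ᵥ (v : Fin n → ℝ) : Fin n → ℝ) := fun v => rfl
  -- gradient of h
  have hGh' : ∀ δ, Gh δ = e.symm (Gg (e δ)) := by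
    intro δ
    have h1 : HasFDerivAt g ((InnerProductSpace.toDual ℝ _) (Gg (e δ))) (e δ) :=
      (hGg (e δ)).hasFDerivAt
    have h2 : HasFDerivAt (fun x => e x) (e.toContinuousLinearEquiv :
        EuclideanSpace ℝ (Fin n) →L[ℝ] EuclideanSpace ℝ (Fin n)) δ :=
      (e.toContinuousLinearEquiv : EuclideanSpace ℝ (Fin n) →L[ℝ]
        EuclideanSpace ℝ (Fin n)).hasFDerivAt
    have h3 : HasFDerivAt (fun x => g (e x))
        (((InnerProductSpace.toDual ℝ _) (Gg (e δ))).comp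
          (e.toContinuousLinearEquiv : EuclideanSpace ℝ (Fin n) →L[ℝ]
            EuclideanSpace ℝ (Fin n))) δ := h1.comp δ h2
    have hfun : h = fun x => g (e x) := by
      funext x; rw [hh x]; rfl
    have h4 : HasFDerivAt h
        ((InnerProductSpace.toDual ℝ _) (e.symm (Gg (e δ)))) δ := by
      rw [hfun]
      convert h3 using 1
      · rfl
      ext v
      simp only [ContinuousLinearMap.comp_apply, InnerProductSpace.toDual_apply_apply,
        ContinuousLinearEquiv.coe_coe, LinearIsometryEquiv.coe_toContinuousLinearEquiv]
      rw [← e.inner_map_map (e.symm (Gg (e δ))) v, e.apply_symm_apply]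
    have h5 : HasGradientAt h (e.symm (Gg (e δ))) δ :=
      hasGradientAt_iff_hasFDerivAt.mpr h4
    exact (hGh δ).unique h5
  intro i
  -- change of variables
  have step1 : (∫ δ : EuclideanSpace ℝ (Fin n),
        (Gh δ i) ^ 2 * σ (WithLp.toLp 2 (U *ᵥ δ : Fin n → ℝ)))
      = ∫ γ : EuclideanSpace ℝ (Fin n), (e.symm (Gg γ) i) ^ 2 * σ γ := by
    have := MeasureTheory.integral_comp e
      (fun γ : EuclideanSpace ℝ (Fin n) => (e.symm (Gg γ) i) ^ 2 * σ γ)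
    rw [← this]
    congr 1
    funext δ
    rw [hGh' δ, he δ]
  rw [step1]
  -- expand e.symm (Gg γ) i as a sum
  have hsum : ∀ γ : EuclideanSpace ℝ (Fin n),
      e.symm (Gg γ) i = ∑ j, U j i * Gg γ j := by
    intro γ
    rw [hesymm]
    show (Uᵀ *ᵥ (Gg γ : Fin n → ℝ)) i = _
    simp [Matrix.mulVec, dotProduct, Matrix.transpose_apply]
  have expand : ∀ γ : EuclideanSpace ℝ (Fin n),
      (e.symm (Gg γ) i) ^ 2 * σ γ
        = ∑ j, ∑ k, (U j i * U k i) * (Gg γ j * Gg γ k * σ γ) := by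
    intro γ
    rw [hsum γ, sq, Finset.sum_mul_sum, Finset.sum_mul]
    refine Finset.sum_congr rfl fun j _ => ?_
    rw [Finset.sum_mul]
    exact Finset.sum_congr rfl fun k _ => by ring
  rw [show (fun γ : EuclideanSpace ℝ (Fin n) => (e.symm (Gg γ) i) ^ 2 * σ γ)
      = fun γ => ∑ j, ∑ k, (U j i * U k i) * (Gg γ j * Gg γ k * σ γ) from
    funext expand]
  rw [MeasureTheory.integral_finset_sum _ (fun j _ =>
    integrable_finset_sum _ (fun k _ => (hIntC j k).const_mul _))]
  have : ∀ j ∈ Finset.univ, (∫ γ : EuclideanSpace ℝ (Fin n),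
      ∑ k, (U j i * U k i) * (Gg γ j * Gg γ k * σ γ))
      = ∑ k, (U j i * U k i) * C j k := by
    intro j _
    rw [MeasureTheory.integral_finset_sum _ (fun k _ => (hIntC j k).const_mul _)]
    exact Finset.sum_congr rfl fun k _ => by
      rw [MeasureTheory.integral_const_mul, hC j k]
  rw [Finset.sum_congr rfl this]
  have hCv : ∀ j, ∑ k, C j k * U k i = lam i * U j i := by
    intro j
    have := congrFun (heig i) j
    simpa [Matrix.mulVec, dotProduct] using this
  have hnorm : ∑ j, U j i * U j i = 1 := by
    have h1 : (Uᵀ * U) i i = (1 : Matrix (Fin n) (Fin n) ℝ) i i := by rw [hU]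
    simpa [Matrix.mul_apply, Matrix.transpose_apply, Matrix.one_apply] using h1
  calc ∑ j, ∑ k, (U j i * U k i) * C j k
      = ∑ j, U j i * ∑ k, C j k * U k i := by
        refine Finset.sum_congr rfl fun j _ => ?_
        rw [Finset.mul_sum]
        exact Finset.sum_congr rfl fun k _ => by ring
    _ = ∑ j, U j i * (lam i * U j i) := by
        refine Finset.sum_congr rfl fun j _ => ?_
        rw [hCv j]
    _ = lam i * ∑ j, U j i * U j i := by
        rw [Finset.mul_sum]
        exact Finset.sum_congr rfl fun j _ => by ring
    _ = lam i := by rw [hnorm, mul_one]
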